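/- For every real p > 1 there exists a constant c_p < ∞ such that for every nonincreasing sequence (μ_n)_{n≥1} of nonnegative real numbers one has Σ_{N=1}^∞ N^{1/p − 2}·σ_N ≤ c_p·(Σ_{n=1}^∞ μ_n)^{1/p}·μ_1^{1 − 1/p}, where σ_N = Σ_{n=1}^N μ_n; the inequality is understood in [0,∞] (both sides may be infinite). -/

import Mathlib

open scoped ENNReal NNReal

private lemma bern {q v : ℝ} (hq0 : 0 ≤ q) (hq1 : q ≤ 1) (hv : v ≤ 1) :
    (1 - v) ^ q ≤ 1 - q * v := by
  have := rpow_one_add_le_one_add_mul_self (s := -v) (by linarith) hq0 hq1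
  simpa [sub_eq_add_neg, mul_neg] using this

private lemma step1 {q : ℝ} (hq0 : 0 < q) (hq1 : q ≤ 1) (N : ℕ) :
    q * ((N : ℝ) + 1) ^ (q - 1) ≤ ((N : ℝ) + 1) ^ q - (N : ℝ) ^ q := by
  set x : ℝ := (N : ℝ) with hx
  have hx0 : 0 ≤ x := Nat.cast_nonneg N
  have hx1 : (0:ℝ) < x + 1 := by linarith
  set v : ℝ := 1 / (x + 1) with hv
  have hv0 : 0 < v := by positivity
  have hv1 : v ≤ 1 := by
    rw [hv, div_le_one hx1]; linarith
  have hxe : x = (x + 1) * (1 - v) := by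
    rw [hv]; field_simp; ring
  have h1 : x ^ q = (x + 1) ^ q * (1 - v) ^ q := by
    rw [hxe, Real.mul_rpow hx1.le (by linarith)]
    rw [← hxe]
  have h2 : (1 - v) ^ q ≤ 1 - q * v := bern hq0.le hq1 hv1
  have h3 : x ^ q ≤ (x + 1) ^ q * (1 - q * v) := by
    rw [h1]
    exact mul_le_mul_of_nonneg_left h2 (Real.rpow_nonneg hx1.le q)
  have h4 : (x + 1) ^ q * v = (x + 1) ^ (q - 1) := by
    rw [Real.rpow_sub hx1, Real.rpow_one, hv]
    ring
  nlinarith [h3, h4]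

private lemma step2 {q : ℝ} (hq0 : 0 < q) (hq1 : q ≤ 1) {x : ℝ} (hx : 1 ≤ x) :
    q * (x + 1) ^ (-q - 1) ≤ x ^ (-q) - (x + 1) ^ (-q) := by
  have hx0 : (0:ℝ) < x := by linarith
  have hx1 : (0:ℝ) < x + 1 := by linarith
  set v : ℝ := 1 / (x + 1) with hv
  have hv0 : 0 < v := by positivity
  have hv1 : v < 1 := by
    rw [hv, div_lt_one hx1]; linarith
  have hxe : x = (x + 1) * (1 - v) := by rw [hv]; field_simp; ring
  have h1 : x ^ (-q) = (x + 1) ^ (-q) * (1 - v) ^ (-q) := by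
    rw [hxe, Real.mul_rpow hx1.le (by linarith)]
    rw [← hxe]
  have hb : (1 - v) ^ q ≤ 1 - q * v := bern hq0.le hq1 hv1.le
  have hpos : (0:ℝ) < (1 - v) ^ q := Real.rpow_pos_of_pos (by linarith) q
  have h2' : (1 + q * v) * (1 - v) ^ q ≤ 1 := by
    nlinarith [mul_le_mul_of_nonneg_left hb (by positivity : (0:ℝ) ≤ 1 + q * v), sq_nonneg (q * v)]
  have h2 : 1 + q * v ≤ (1 - v) ^ (-q) := by
    rw [Real.rpow_neg (by linarith : (0:ℝ) ≤ 1 - v), ← one_div]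
    exact (le_div_iff₀ hpos).mpr h2'
  have h3 : (x + 1) ^ (-q) * (1 + q * v) ≤ x ^ (-q) := by
    rw [h1]
    exact mul_le_mul_of_nonneg_left h2 (Real.rpow_nonneg hx1.le _)
  have h4 : (x + 1) ^ (-q) * v = (x + 1) ^ (-q - 1) := by
    rw [Real.rpow_sub hx1, Real.rpow_one, hv]
    ring
  nlinarith [h3, h4]

private lemma sumA {q : ℝ} (hq0 : 0 < q) (hq1 : q ≤ 1) (M : ℕ) :
    ∑ N ∈ Finset.range M, ((N : ℝ) + 1) ^ (q - 1) ≤ (M : ℝ) ^ q / q := by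
  rw [le_div_iff₀ hq0]
  have key : ∀ N ∈ Finset.range M, ((N : ℝ) + 1) ^ (q - 1) * q ≤
      ((N + 1 : ℕ) : ℝ) ^ q - ((N : ℕ) : ℝ) ^ q := by
    intro N _
    have := step1 hq0 hq1 N
    push_cast
    linarith
  calc (∑ N ∈ Finset.range M, ((N : ℝ) + 1) ^ (q - 1)) * q
      = ∑ N ∈ Finset.range M, ((N : ℝ) + 1) ^ (q - 1) * q := Finset.sum_mul ..
    _ ≤ ∑ N ∈ Finset.range M, (((N + 1 : ℕ) : ℝ) ^ q - ((N : ℕ) : ℝ) ^ q) :=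
        Finset.sum_le_sum key
    _ = ((M : ℕ) : ℝ) ^ q - ((0 : ℕ) : ℝ) ^ q := Finset.sum_range_sub (fun i => ((i : ℕ) : ℝ) ^ q) M
    _ ≤ (M : ℝ) ^ q := by
        simp [Real.zero_rpow hq0.ne']

private lemma sumB {q : ℝ} (hq0 : 0 < q) (hq1 : q ≤ 1) {M : ℕ} (hM : 1 ≤ M) (K : ℕ) :
    ∑ k ∈ Finset.range K, (((M + k : ℕ) : ℝ) + 1) ^ (-q - 1) ≤ (M : ℝ) ^ (-q) / q := by
  rw [le_div_iff₀ hq0]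
  have key : ∀ k ∈ Finset.range K, (((M + k : ℕ) : ℝ) + 1) ^ (-q - 1) * q ≤
      (((M + k : ℕ) : ℝ)) ^ (-q) - (((M + (k+1) : ℕ) : ℝ)) ^ (-q) := by
    intro k _
    have hx : (1:ℝ) ≤ ((M + k : ℕ) : ℝ) := by
      have : (1:ℕ) ≤ M + k := le_trans hM (Nat.le_add_right M k)
      exact_mod_cast this
    have := step2 hq0 hq1 hx
    push_cast
    push_cast at this
    ring_nf
    ring_nf at this
    linarith
  calc (∑ k ∈ Finset.range K, (((M + k : ℕ) : ℝ) + 1) ^ (-q - 1)) * q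
      = ∑ k ∈ Finset.range K, (((M + k : ℕ) : ℝ) + 1) ^ (-q - 1) * q := Finset.sum_mul ..
    _ ≤ ∑ k ∈ Finset.range K, ((((M + k : ℕ) : ℝ)) ^ (-q) - (((M + (k+1) : ℕ) : ℝ)) ^ (-q)) :=
        Finset.sum_le_sum key
    _ = (((M + 0 : ℕ) : ℝ)) ^ (-q) - (((M + K : ℕ) : ℝ)) ^ (-q) :=
        Finset.sum_range_sub' (fun i => (((M + i : ℕ) : ℝ)) ^ (-q)) K
    _ ≤ (M : ℝ) ^ (-q) := by
        have : (0:ℝ) ≤ (((M + K : ℕ) : ℝ)) ^ (-q) := Real.rpow_nonneg (Nat.cast_nonneg _) _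
        simp only [Nat.add_zero]
        linarith

private lemma enn_rpow_nat (n : ℕ) (s : ℝ) :
    ((n : ℝ≥0∞) + 1) ^ s = ENNReal.ofReal (((n : ℝ) + 1) ^ s) := by
  rw [← ENNReal.ofReal_rpow_of_pos (by positivity)]
  congr 1
  rw [ENNReal.ofReal_add (Nat.cast_nonneg n) zero_le_one, ENNReal.ofReal_natCast,
    ENNReal.ofReal_one]

private lemma final_real {r t a' T' : ℝ} (hr0 : 0 < r) (hr1 : r < 1) (ha : 0 < a')
    (hT : 0 < T') (ht : t = T' / a') (ht1 : 1 ≤ t) {M : ℕ} (htM : t ≤ (M : ℝ))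
    (hM2 : (M : ℝ) ≤ 2 * t) :
    (M : ℝ) ^ r / r * a' + (M : ℝ) ^ (r - 1) / (1 - r) * T' ≤
      (2 / r + 1 / (1 - r)) * (T' ^ r * a' ^ (1 - r)) := by
  have hMpos : (0:ℝ) < (M : ℝ) := by linarith
  have htpos : (0:ℝ) < t := by linarith
  set X : ℝ := T' ^ r * a' ^ (1 - r) with hX
  have hXpos : 0 < X := by positivity
  have hta : t * a' = T' := by rw [ht]; field_simp
  have h1 : (M : ℝ) ^ r * a' ≤ 2 * X := by
    have e1 : (M : ℝ) ^ r ≤ (2 * t) ^ r := Real.rpow_le_rpow hMpos.le hM2 hr0.le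
    have e2 : (2 * t) ^ r = 2 ^ r * t ^ r := Real.mul_rpow (by norm_num) htpos.le
    have e3 : (2:ℝ) ^ r ≤ 2 := by
      calc (2:ℝ) ^ r ≤ 2 ^ (1:ℝ) := Real.rpow_le_rpow_of_exponent_le one_le_two hr1.le
        _ = 2 := Real.rpow_one 2
    have e4 : t ^ r * a' = X := by
      rw [ht, Real.div_rpow hT.le ha.le, hX]
      rw [Real.rpow_sub ha, Real.rpow_one]
      field_simp
    have e5 : t ^ r ≥ 0 := Real.rpow_nonneg htpos.le r
    nlinarith [Real.rpow_nonneg htpos.le r]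
  have h2 : (M : ℝ) ^ (r - 1) * T' ≤ X := by
    have e1 : (M : ℝ) ^ (r - 1) ≤ t ^ (r - 1) :=
      Real.rpow_le_rpow_of_nonpos htpos htM (by linarith)
    have hA : a' ^ (1 - r) = (a' ^ (r - 1))⁻¹ := by
      rw [← Real.rpow_neg ha.le]; norm_num
    have hTT : T' ^ (r - 1) * T' = T' ^ r := by
      rw [← Real.rpow_add_one hT.ne']; ring_nf
    have e2 : t ^ (r - 1) * T' = X := by
      rw [ht, Real.div_rpow hT.le ha.le, hX, hA, ← hTT, div_eq_mul_inv]
      ring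
    nlinarith
  have hr1' : (0:ℝ) < 1 - r := by linarith
  calc (M : ℝ) ^ r / r * a' + (M : ℝ) ^ (r - 1) / (1 - r) * T'
      = ((M : ℝ) ^ r * a') / r + ((M : ℝ) ^ (r - 1) * T') / (1 - r) := by ring
    _ ≤ (2 * X) / r + X / (1 - r) := by gcongr
    _ = (2 / r + 1 / (1 - r)) * X := by field_simp

/-- Interpolation inequality: for every `p > 1` there is a constant `c_p < ∞` such that for
every nonincreasing sequence `(μ_n)_{n≥1}` of nonnegative reals, with `σ_N = Σ_{n≤N} μ_n`,
one has `Σ_N N^{1/p−2} σ_N ≤ c_p (Σ μ_n)^{1/p} μ_1^{1−1/p}` in `[0,∞]`. -/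
theorem interpolation_inequality_sequences (p : ℝ) (hp : 1 < p) :
    ∃ c : ℝ≥0, ∀ μ : ℕ → ℝ≥0, Antitone μ →
      ∑' N : ℕ, ((N + 1 : ℝ≥0∞) ^ (1 / p - 2)) *
          (∑ n ∈ Finset.range (N + 1), (μ n : ℝ≥0∞)) ≤
        (c : ℝ≥0∞) * (∑' n : ℕ, (μ n : ℝ≥0∞)) ^ (1 / p) * (μ 0 : ℝ≥0∞) ^ (1 - 1 / p) := by
  have hp0 : (0:ℝ) < p := lt_trans one_pos hp
  set r : ℝ := 1 / p with hrdef
  have hr0 : 0 < r := by positivity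
  have hr1 : r < 1 := by rw [hrdef, div_lt_one hp0]; exact hp
  have hq0 : (0:ℝ) < 1 - r := by linarith
  refine ⟨(2 / r + 1 / (1 - r)).toNNReal, ?_⟩
  intro μ hμ
  by_cases ha : μ 0 = 0
  · have hz : ∀ n : ℕ, μ n = 0 := fun n => le_antisymm (ha ▸ hμ (Nat.zero_le n)) zero_le
    simp [hz]
  set T : ℝ≥0∞ := ∑' n, (μ n : ℝ≥0∞) with hTdef
  have ha0 : (μ 0 : ℝ≥0∞) ≠ 0 := by exact_mod_cast ha
  have haT : (μ 0 : ℝ≥0∞) ≠ ⊤ := ENNReal.coe_ne_top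
  have hc0 : ((2 / r + 1 / (1 - r)).toNNReal : ℝ≥0∞) ≠ 0 := by
    simp only [ne_eq, ENNReal.coe_eq_zero, Real.toNNReal_eq_zero, not_le]
    positivity
  by_cases hT : T = ⊤
  · have htop : (↑(2 / r + 1 / (1 - r)).toNNReal : ℝ≥0∞) * T ^ r * (μ 0 : ℝ≥0∞) ^ (1 - r) = ⊤ := by
      rw [hT, ENNReal.top_rpow_of_pos hr0, ENNReal.mul_top hc0]
      exact ENNReal.top_mul (by simp [ENNReal.rpow_eq_zero_iff, ha0, haT])
    exact htop ▸ le_top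
  -- main case
  have haleT : (μ 0 : ℝ≥0∞) ≤ T := ENNReal.le_tsum 0
  set a' : ℝ := ((μ 0 : ℝ≥0∞)).toReal with ha'def
  set T' : ℝ := T.toReal with hT'def
  have ha'pos : 0 < a' := ENNReal.toReal_pos ha0 haT
  have hT0 : T ≠ 0 := fun h => ha0 (le_antisymm (h ▸ haleT) zero_le)
  have hT'pos : 0 < T' := ENNReal.toReal_pos hT0 hT
  have haT' : a' ≤ T' := ENNReal.toReal_mono hT haleT
  set t : ℝ := T' / a' with htdef
  have ht1 : 1 ≤ t := (one_le_div ha'pos).mpr haT'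
  set M : ℕ := ⌈t⌉₊ with hMdef
  have htM : t ≤ (M : ℝ) := Nat.le_ceil t
  have hM2 : (M : ℝ) ≤ 2 * t := by
    have h := Nat.ceil_lt_add_one (by linarith : (0:ℝ) ≤ t)
    rw [← hMdef] at h
    linarith
  have hM1 : 1 ≤ M := Nat.ceil_pos.mpr (by linarith)
  -- pointwise bound
  have key : ∀ N : ℕ,
      ((N : ℝ≥0∞) + 1) ^ (r - 2) * (∑ n ∈ Finset.range (N + 1), (μ n : ℝ≥0∞)) ≤
        (if N < M then ((N : ℝ≥0∞) + 1) ^ (r - 1) * (μ 0 : ℝ≥0∞) else 0) +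
          (if M ≤ N then ((N : ℝ≥0∞) + 1) ^ (r - 2) * T else 0) := by
    intro N
    have hb0 : ((N : ℝ≥0∞) + 1) ≠ 0 := by simp
    have hbt : ((N : ℝ≥0∞) + 1) ≠ ⊤ := by
      simp [ENNReal.add_eq_top]
    by_cases h : N < M
    · rw [if_pos h, if_neg (not_le.mpr h), add_zero]
      have hσ : (∑ n ∈ Finset.range (N + 1), (μ n : ℝ≥0∞)) ≤
          ((N : ℝ≥0∞) + 1) * (μ 0 : ℝ≥0∞) := by
        calc ∑ n ∈ Finset.range (N + 1), (μ n : ℝ≥0∞)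
            ≤ ∑ _n ∈ Finset.range (N + 1), (μ 0 : ℝ≥0∞) :=
              Finset.sum_le_sum fun n _ => by exact_mod_cast hμ (Nat.zero_le n)
          _ = ((N : ℝ≥0∞) + 1) * (μ 0 : ℝ≥0∞) := by
              rw [Finset.sum_const, Finset.card_range, nsmul_eq_mul]
              push_cast
              ring
      calc ((N : ℝ≥0∞) + 1) ^ (r - 2) * (∑ n ∈ Finset.range (N + 1), (μ n : ℝ≥0∞))
          ≤ ((N : ℝ≥0∞) + 1) ^ (r - 2) * (((N : ℝ≥0∞) + 1) * (μ 0 : ℝ≥0∞)) :=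
            mul_le_mul_right hσ _
        _ = ((N : ℝ≥0∞) + 1) ^ (r - 1) * (μ 0 : ℝ≥0∞) := by
            rw [← mul_assoc]
            congr 1
            calc ((N : ℝ≥0∞) + 1) ^ (r - 2) * ((N : ℝ≥0∞) + 1)
                = ((N : ℝ≥0∞) + 1) ^ (r - 2) * ((N : ℝ≥0∞) + 1) ^ (1 : ℝ) := by
                  rw [ENNReal.rpow_one]
              _ = ((N : ℝ≥0∞) + 1) ^ (r - 2 + 1) := (ENNReal.rpow_add _ _ hb0 hbt).symm
              _ = ((N : ℝ≥0∞) + 1) ^ (r - 1) := by rw [show r - 2 + (1:ℝ) = r - 1 by ring]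
    · rw [if_neg h, if_pos (not_lt.mp h), zero_add]
      exact mul_le_mul_right (ENNReal.sum_le_tsum _) _
  refine le_trans (ENNReal.tsum_le_tsum key) ?_
  rw [ENNReal.tsum_add]
  have h1 : (∑' N : ℕ, if N < M then ((N : ℝ≥0∞) + 1) ^ (r - 1) * (μ 0 : ℝ≥0∞) else 0) ≤
      ENNReal.ofReal ((M : ℝ) ^ r / r) * (μ 0 : ℝ≥0∞) := by
    rw [tsum_eq_sum (s := Finset.range M) (fun b hb => if_neg (by simpa using hb))]
    calc ∑ N ∈ Finset.range M, (if N < M then ((N : ℝ≥0∞) + 1) ^ (r - 1) * (μ 0 : ℝ≥0∞) else 0)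
        = ∑ N ∈ Finset.range M, ((N : ℝ≥0∞) + 1) ^ (r - 1) * (μ 0 : ℝ≥0∞) :=
          Finset.sum_congr rfl fun N hN => if_pos (Finset.mem_range.mp hN)
      _ = (∑ N ∈ Finset.range M, ((N : ℝ≥0∞) + 1) ^ (r - 1)) * (μ 0 : ℝ≥0∞) :=
          (Finset.sum_mul ..).symm
      _ ≤ ENNReal.ofReal ((M : ℝ) ^ r / r) * (μ 0 : ℝ≥0∞) := by
          apply mul_le_mul_left
          calc ∑ N ∈ Finset.range M, ((N : ℝ≥0∞) + 1) ^ (r - 1)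
              = ∑ N ∈ Finset.range M, ENNReal.ofReal (((N : ℝ) + 1) ^ (r - 1)) :=
                Finset.sum_congr rfl fun N _ => enn_rpow_nat N (r - 1)
            _ = ENNReal.ofReal (∑ N ∈ Finset.range M, ((N : ℝ) + 1) ^ (r - 1)) :=
                (ENNReal.ofReal_sum_of_nonneg fun N _ =>
                  Real.rpow_nonneg (by positivity) _).symm
            _ ≤ ENNReal.ofReal ((M : ℝ) ^ r / r) :=
                ENNReal.ofReal_le_ofReal (sumA hr0 hr1.le M)
  have h2 : (∑' N : ℕ, if M ≤ N then ((N : ℝ≥0∞) + 1) ^ (r - 2) * T else 0) ≤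
      ENNReal.ofReal ((M : ℝ) ^ (r - 1) / (1 - r)) * T := by
    apply ENNReal.tsum_le_of_sum_range_le
    intro K
    have hfil : (Finset.range K).filter (fun N => M ≤ N) = Finset.Ico M K := by
      ext x
      simp only [Finset.mem_filter, Finset.mem_range, Finset.mem_Ico]
      omega
    calc ∑ N ∈ Finset.range K, (if M ≤ N then ((N : ℝ≥0∞) + 1) ^ (r - 2) * T else 0)
        = ∑ N ∈ Finset.Ico M K, ((N : ℝ≥0∞) + 1) ^ (r - 2) * T := by
          rw [← Finset.sum_filter, hfil]
      _ = ∑ k ∈ Finset.range (K - M), (((M + k : ℕ) : ℝ≥0∞) + 1) ^ (r - 2) * T := by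
          rw [Finset.sum_Ico_eq_sum_range]
      _ = (∑ k ∈ Finset.range (K - M), (((M + k : ℕ) : ℝ≥0∞) + 1) ^ (r - 2)) * T :=
          (Finset.sum_mul ..).symm
      _ ≤ ENNReal.ofReal ((M : ℝ) ^ (r - 1) / (1 - r)) * T := by
          apply mul_le_mul_left
          have hsB := sumB (q := 1 - r) hq0 (by linarith) hM1 (K - M)
          rw [show -(1 - r) - 1 = r - 2 by ring, show -(1 - r) = r - 1 by ring] at hsB
          calc ∑ k ∈ Finset.range (K - M), (((M + k : ℕ) : ℝ≥0∞) + 1) ^ (r - 2)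
              = ∑ k ∈ Finset.range (K - M), ENNReal.ofReal ((((M + k : ℕ) : ℝ) + 1) ^ (r - 2)) :=
                Finset.sum_congr rfl fun k _ => enn_rpow_nat (M + k) (r - 2)
            _ = ENNReal.ofReal (∑ k ∈ Finset.range (K - M), (((M + k : ℕ) : ℝ) + 1) ^ (r - 2)) :=
                (ENNReal.ofReal_sum_of_nonneg fun k _ =>
                  Real.rpow_nonneg (by positivity) _).symm
            _ ≤ ENNReal.ofReal ((M : ℝ) ^ (r - 1) / (1 - r)) :=
                ENNReal.ofReal_le_ofReal hsB
  refine le_trans (add_le_add h1 h2) ?_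
  have haR : (μ 0 : ℝ≥0∞) = ENNReal.ofReal a' := (ENNReal.ofReal_toReal haT).symm
  have hTR : T = ENNReal.ofReal T' := (ENNReal.ofReal_toReal hT).symm
  have hcR : ((2 / r + 1 / (1 - r)).toNNReal : ℝ≥0∞) = ENNReal.ofReal (2 / r + 1 / (1 - r)) := rfl
  rw [haR, hTR, hcR]
  rw [← ENNReal.ofReal_mul (by positivity), ← ENNReal.ofReal_mul (by positivity),
    ← ENNReal.ofReal_add (by positivity) (by positivity),
    ENNReal.ofReal_rpow_of_pos hT'pos, ENNReal.ofReal_rpow_of_pos ha'pos,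
    ← ENNReal.ofReal_mul (by positivity), ← ENNReal.ofReal_mul (by positivity)]
  apply ENNReal.ofReal_le_ofReal
  rw [mul_assoc]
  exact final_real hr0 hr1 ha'pos hT'pos htdef ht1 htM hM2
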